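/- The CPT-function is a difference of monotonic functions: Assume u, w⁺, w⁻ are monotone increasing with u(0) = 0. Then there exist functions F, G : [0,1]^k → ℝ, each componentwise monotone increasing (p ≥ p' componentwise implies F(p) ≥ F(p') and G(p) ≥ G(p')), such that cpt(o,p) = F(p) − G(p) for all p ∈ [0,1]^k. Concretely, one may take F(p) = Σ_{i : o_i > 0} u(o_i)·π_i(p) and G(p) = −Σ_{i : o_i < 0} u(o_i)·π_i(p). -/

import Mathlib

/-- The CPT decision weight of the `i`-th outcome (1-based indices `1,...,k`). -/
noncomputable def decisionWeight (k : ℕ) (o : ℕ → ℝ) (wp wm : ℝ → ℝ)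
    (p : ℕ → ℝ) (i : ℕ) : ℝ :=
  if 0 < o i then
    wp (∑ m ∈ Finset.Icc i k, p m) - wp (∑ m ∈ Finset.Icc (i + 1) k, p m)
  else if o i < 0 then
    wm (∑ m ∈ Finset.Icc 1 i, p m) - wm (∑ m ∈ Finset.Icc 1 (i - 1), p m)
  else 0

/-- The CPT-function `cpt(o,p) = Σ_{i=1}^k u(o_i) · π_i(p)`. -/
noncomputable def cpt (k : ℕ) (o : ℕ → ℝ) (u wp wm : ℝ → ℝ) (p : ℕ → ℝ) : ℝ :=
  ∑ i ∈ Finset.Icc 1 k, u (o i) * decisionWeight k o wp wm p i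

lemma abel_up (a f : ℕ → ℝ) (j : ℕ) :
    ∀ k, j ≤ k →
    ∑ i ∈ Finset.Icc j k, a i * (f i - f (i+1))
      = a j * f j - a k * f (k+1) + ∑ i ∈ Finset.Ioc j k, (a i - a (i-1)) * f i := by
  intro k hk
  induction k, hk using Nat.le_induction with
  | base => simp; ring
  | succ n hn ih =>
    rw [Finset.sum_Icc_succ_top (by omega), ih, Finset.sum_Ioc_succ_top (by omega)]
    have h1 : (n+1) - 1 = n := rfl
    rw [h1]; ring

lemma abel_down (b g : ℕ → ℝ) (j : ℕ) :
    ∀ l, j ≤ l →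
    ∑ i ∈ Finset.Icc j l, b i * (g i - g (i-1))
      = b l * g l - b j * g (j-1) + ∑ i ∈ Finset.Ico j l, (b i - b (i+1)) * g i := by
  intro l hl
  induction l, hl using Nat.le_induction with
  | base => simp; ring
  | succ n hn ih =>
    rw [Finset.sum_Icc_succ_top (by omega), ih, Finset.sum_Ico_succ_top (by omega)]
    have h1 : (n+1) - 1 = n := rfl
    rw [h1]; ring

/-- The CPT-function is a difference of componentwise monotone increasing functions,
concretely `F(p) = Σ_{i : o_i > 0} u(o_i)·π_i(p)` and `G(p) = −Σ_{i : o_i < 0} u(o_i)·π_i(p)`. -/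
theorem cpt_diff_of_monotone (k : ℕ) (hk : 1 ≤ k) (o : ℕ → ℝ) (u wp wm : ℝ → ℝ)
    (hord : ∀ i j : ℕ, 1 ≤ i → i ≤ j → j ≤ k → o i ≤ o j)
    (hu : ∀ x y : ℝ, x ≥ y → u x ≥ u y)
    (hwp : ∀ x y : ℝ, x ≥ y → wp x ≥ wp y)
    (hwm : ∀ x y : ℝ, x ≥ y → wm x ≥ wm y)
    (hu0 : u 0 = 0) :
    ∃ F G : (ℕ → ℝ) → ℝ,
      (∀ p p' : ℕ → ℝ,
          (∀ i ∈ Finset.Icc 1 k, p i ∈ Set.Icc (0:ℝ) 1) →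
          (∀ i ∈ Finset.Icc 1 k, p' i ∈ Set.Icc (0:ℝ) 1) →
          (∀ i ∈ Finset.Icc 1 k, p i ≥ p' i) → F p ≥ F p') ∧
      (∀ p p' : ℕ → ℝ,
          (∀ i ∈ Finset.Icc 1 k, p i ∈ Set.Icc (0:ℝ) 1) →
          (∀ i ∈ Finset.Icc 1 k, p' i ∈ Set.Icc (0:ℝ) 1) →
          (∀ i ∈ Finset.Icc 1 k, p i ≥ p' i) → G p ≥ G p') ∧
      (∀ p : ℕ → ℝ, (∀ i ∈ Finset.Icc 1 k, p i ∈ Set.Icc (0:ℝ) 1) →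
          cpt k o u wp wm p = F p - G p) ∧
      (∀ p : ℕ → ℝ, F p =
          ∑ i ∈ (Finset.Icc 1 k).filter (fun i => 0 < o i),
            u (o i) * decisionWeight k o wp wm p i) ∧
      (∀ p : ℕ → ℝ, G p =
          -∑ i ∈ (Finset.Icc 1 k).filter (fun i => o i < 0),
            u (o i) * decisionWeight k o wp wm p i) := by
  classical
  refine ⟨fun p => ∑ i ∈ (Finset.Icc 1 k).filter (fun i => 0 < o i),
            u (o i) * decisionWeight k o wp wm p i,
          fun p => -∑ i ∈ (Finset.Icc 1 k).filter (fun i => o i < 0),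
            u (o i) * decisionWeight k o wp wm p i,
          ?_, ?_, ?_, fun _ => rfl, fun _ => rfl⟩
  · -- F monotone
    intro p p' hp hp' hpp'
    beta_reduce
    by_cases hne : ((Finset.Icc 1 k).filter (fun i => 0 < o i)).Nonempty
    · set P := (Finset.Icc 1 k).filter (fun i => 0 < o i) with hPdef
      set j := P.min' hne with hjdef
      have hjP : j ∈ P := P.min'_mem hne
      have hj1 : 1 ≤ j := (Finset.mem_Icc.1 (Finset.mem_filter.1 hjP).1).1
      have hjk : j ≤ k := (Finset.mem_Icc.1 (Finset.mem_filter.1 hjP).1).2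
      have hoj : 0 < o j := (Finset.mem_filter.1 hjP).2
      have hP : P = Finset.Icc j k := by
        ext i
        simp only [hPdef, Finset.mem_filter, Finset.mem_Icc]
        constructor
        · rintro ⟨⟨h1, h2⟩, h3⟩
          exact ⟨P.min'_le i (by simp [hPdef, Finset.mem_filter, Finset.mem_Icc]; exact ⟨⟨h1, h2⟩, h3⟩), h2⟩
        · rintro ⟨h1, h2⟩
          exact ⟨⟨le_trans hj1 h1, h2⟩, lt_of_lt_of_le hoj (hord j i hj1 h1 h2)⟩
      have hrw : ∀ q : ℕ → ℝ,
          ∑ i ∈ P, u (o i) * decisionWeight k o wp wm q i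
          = (fun i => u (o i)) j * (fun i => wp (∑ m ∈ Finset.Icc i k, q m)) j
            - (fun i => u (o i)) k * (fun i => wp (∑ m ∈ Finset.Icc i k, q m)) (k+1)
            + ∑ i ∈ Finset.Ioc j k, ((fun i => u (o i)) i - (fun i => u (o i)) (i-1))
                * (fun i => wp (∑ m ∈ Finset.Icc i k, q m)) i := by
        intro q
        rw [hP, ← abel_up (fun i => u (o i)) (fun i => wp (∑ m ∈ Finset.Icc i k, q m)) j k hjk]
        refine Finset.sum_congr rfl fun i hi => ?_
        have hi' : 0 < o i := by
          rw [← hP] at hi; exact (Finset.mem_filter.1 hi).2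
        simp [decisionWeight, hi']
      rw [hrw p, hrw p']
      simp only [Finset.Icc_eq_empty (show ¬ k + 1 ≤ k by omega), Finset.sum_empty]
      have hsum : ∀ i, 1 ≤ i → (∑ m ∈ Finset.Icc i k, p m) ≥ ∑ m ∈ Finset.Icc i k, p' m := by
        intro i hi
        refine Finset.sum_le_sum fun m hm => ?_
        have := Finset.mem_Icc.1 hm
        exact hpp' m (Finset.mem_Icc.2 ⟨le_trans hi this.1, this.2⟩)
      gcongr
      · rw [← hu0]; exact hu (o j) 0 (le_of_lt hoj)
      · exact hwp _ _ (hsum j hj1)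
      · rename' x => i; rename_i hi
        have hi' := Finset.mem_Ioc.1 hi
        have : u (o (i-1)) ≤ u (o i) :=
          hu (o i) (o (i-1)) (hord (i-1) i (by omega) (by omega) hi'.2)
        linarith
      · rename' x => i; rename_i hi
        have hi' := Finset.mem_Ioc.1 hi
        exact hwp _ _ (hsum i (by omega))
    · rw [Finset.not_nonempty_iff_eq_empty] at hne
      simp [hne]
  · -- G monotone
    intro p p' hp hp' hpp'
    beta_reduce
    by_cases hne : ((Finset.Icc 1 k).filter (fun i => o i < 0)).Nonempty
    · set N := (Finset.Icc 1 k).filter (fun i => o i < 0) with hNdef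
      set l := N.max' hne with hldef
      have hlN : l ∈ N := N.max'_mem hne
      have hl1 : 1 ≤ l := (Finset.mem_Icc.1 (Finset.mem_filter.1 hlN).1).1
      have hlk : l ≤ k := (Finset.mem_Icc.1 (Finset.mem_filter.1 hlN).1).2
      have hol : o l < 0 := (Finset.mem_filter.1 hlN).2
      have hN : N = Finset.Icc 1 l := by
        ext i
        simp only [hNdef, Finset.mem_filter, Finset.mem_Icc]
        constructor
        · rintro ⟨⟨h1, h2⟩, h3⟩
          exact ⟨h1, N.le_max' i (by simp [hNdef, Finset.mem_filter, Finset.mem_Icc]; exact ⟨⟨h1, h2⟩, h3⟩)⟩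
        · rintro ⟨h1, h2⟩
          exact ⟨⟨h1, le_trans h2 hlk⟩, lt_of_le_of_lt (hord i l h1 h2 hlk) hol⟩
      have hrw : ∀ q : ℕ → ℝ,
          -∑ i ∈ N, u (o i) * decisionWeight k o wp wm q i
          = (fun i => -u (o i)) l * (fun i => wm (∑ m ∈ Finset.Icc 1 i, q m)) l
            - (fun i => -u (o i)) 1 * (fun i => wm (∑ m ∈ Finset.Icc 1 i, q m)) (1-1)
            + ∑ i ∈ Finset.Ico 1 l, ((fun i => -u (o i)) i - (fun i => -u (o i)) (i+1))
                * (fun i => wm (∑ m ∈ Finset.Icc 1 i, q m)) i := by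
        intro q
        rw [← abel_down (fun i => -u (o i)) (fun i => wm (∑ m ∈ Finset.Icc 1 i, q m)) 1 l hl1,
            hN, ← Finset.sum_neg_distrib]
        refine Finset.sum_congr rfl fun i hi => ?_
        have hi' : o i < 0 := by
          rw [← hN] at hi; exact (Finset.mem_filter.1 hi).2
        have hi'' : ¬ 0 < o i := by linarith
        simp [decisionWeight, hi', hi'']
      rw [hrw p, hrw p']
      simp only [show (1:ℕ) - 1 = 0 from rfl,
        Finset.Icc_eq_empty (show ¬ (1:ℕ) ≤ 0 by omega), Finset.sum_empty]
      have hsum : ∀ i, i ≤ l → (∑ m ∈ Finset.Icc 1 i, p m) ≥ ∑ m ∈ Finset.Icc 1 i, p' m := by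
        intro i hi
        refine Finset.sum_le_sum fun m hm => ?_
        have := Finset.mem_Icc.1 hm
        exact hpp' m (Finset.mem_Icc.2 ⟨this.1, le_trans this.2 (le_trans hi hlk)⟩)
      gcongr
      · have : u (o l) ≤ u 0 := hu 0 (o l) (le_of_lt hol)
        rw [hu0] at this; linarith
      · exact hwm _ _ (hsum l le_rfl)
      · rename' x => i; rename_i hi
        have hi' := Finset.mem_Ico.1 hi
        have : u (o i) ≤ u (o (i+1)) :=
          hu (o (i+1)) (o i) (hord i (i+1) hi'.1 (by omega) (by omega))
        linarith
      · rename' x => i; rename_i hi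
        have hi' := Finset.mem_Ico.1 hi
        exact hwm _ _ (hsum i (le_of_lt hi'.2))
    · rw [Finset.not_nonempty_iff_eq_empty] at hne
      simp [hne]
  · -- cpt = F - G
    intro p hp
    have h1 : cpt k o u wp wm p
        = ∑ i ∈ (Finset.Icc 1 k).filter (fun i => 0 < o i),
            u (o i) * decisionWeight k o wp wm p i
          + ∑ i ∈ (Finset.Icc 1 k).filter (fun i => ¬ 0 < o i),
            u (o i) * decisionWeight k o wp wm p i := by
      rw [cpt, Finset.sum_filter_add_sum_filter_not]
    have h2 : ∑ i ∈ (Finset.Icc 1 k).filter (fun i => ¬ 0 < o i),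
            u (o i) * decisionWeight k o wp wm p i
        = ∑ i ∈ (Finset.Icc 1 k).filter (fun i => o i < 0),
            u (o i) * decisionWeight k o wp wm p i := by
      refine (Finset.sum_subset ?_ ?_).symm
      · intro i hi
        simp only [Finset.mem_filter] at hi ⊢
        exact ⟨hi.1, by linarith [hi.2]⟩
      · intro i hi hni
        simp only [Finset.mem_filter] at hi hni
        have h0 : o i = 0 := by
          by_contra h
          rcases lt_or_gt_of_ne h with hlt | hgt
          · exact hni ⟨hi.1, hlt⟩
          · exact hi.2 hgt
        rw [h0, hu0, zero_mul]
    rw [h1, h2]; ring
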